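/- Let λ be a partition with at most m parts, μ a composition of length m with |μ| = |λ|, and ν ∈ ℤ_{≥0}^{m−1} with ν_i + μ_i ≥ μ_{i+1} for all 1 ≤ i ≤ m−1. Then for every T ∈ SST(λ,μ) the filling θ_ν(T) is a Littlewood–Richardson tableau of shape Sh_ν(μ) and content λ, and θ_ν defines a bijection from SST(λ,μ) onto LR(Sh_ν(μ), λ). -/

import Mathlib

/-!
Statement 9 (Lemma 5.1): `θ_ν` is a bijection `SST(λ,μ) ↔ LR(Sh_ν(μ),λ)`.

Finite skew tableaux are encoded by row data as in Statement 1: `m` rows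
indexed top to bottom, row `r` occupying (0-indexed) columns
`off r, …, off r + len r - 1`; fillings `f : ℕ → ℕ → ℕ` are positive inside
the shape and `0` outside.  Partitions and compositions are 0-indexed
functions `ℕ → ℕ` vanishing beyond their length.
-/

def IsFilling (m : ℕ) (len : ℕ → ℕ) (f : ℕ → ℕ → ℕ) : Prop :=
  (∀ i k, i < m → k < len i → 0 < f i k) ∧
  (∀ i k, m ≤ i ∨ len i ≤ k → f i k = 0)

def EntriesLE (n : ℕ) (f : ℕ → ℕ → ℕ) : Prop := ∀ i k, f i k ≤ n

def RowsWeak (m : ℕ) (len : ℕ → ℕ) (f : ℕ → ℕ → ℕ) : Prop :=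
  ∀ i, i < m → ∀ k, k + 1 < len i → f i k ≤ f i (k + 1)

def ColsStrict (m : ℕ) (off len : ℕ → ℕ) (f : ℕ → ℕ → ℕ) : Prop :=
  ∀ i j, i + 1 < m → off i ≤ j → j < off i + len i →
    off (i + 1) ≤ j → j < off (i + 1) + len (i + 1) →
    f i (j - off i) < f (i + 1) (j - off (i + 1))

def Semistandard (m : ℕ) (off len : ℕ → ℕ) (f : ℕ → ℕ → ℕ) : Prop :=
  RowsWeak m len f ∧ ColsStrict m off len f

def IsSkewShape (m : ℕ) (off len : ℕ → ℕ) : Prop :=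
  ∀ i, i + 1 < m → off (i + 1) ≤ off i ∧ off (i + 1) + len (i + 1) ≤ off i + len i

def shiftRow (off : ℕ → ℕ) (i0 : ℕ) : ℕ → ℕ := fun i => if i = i0 then off i - 1 else off i

def Nonmovable (m : ℕ) (off len : ℕ → ℕ) (f : ℕ → ℕ → ℕ) : Prop :=
  Semistandard m off len f ∧
  ∀ i0, i0 < m → 0 < len i0 →
    ¬ (0 < off i0 ∧ IsSkewShape m (shiftRow off i0) len ∧
        Semistandard m (shiftRow off i0) len f)

def rowCount (len : ℕ → ℕ) (f : ℕ → ℕ → ℕ) (i v : ℕ) : ℕ :=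
  ((Finset.range (len i)).filter (fun k => f i k = v)).card

/-- the number of entries of `f` equal to `v`. -/
def content (m : ℕ) (len : ℕ → ℕ) (f : ℕ → ℕ → ℕ) (v : ℕ) : ℕ :=
  ∑ i ∈ Finset.range m, rowCount len f i v

/-- the reading word of a tableau: rows top to bottom, each read right to left. -/
def word (m : ℕ) (len : ℕ → ℕ) (f : ℕ → ℕ → ℕ) : List ℕ :=
  (List.range m).flatMap (fun i => ((List.range (len i)).reverse.map (f i)))

/-- a lattice word: every initial segment contains at least as many `i`'s as `(i+1)`'s. -/
def IsLatticeWord (w : List ℕ) : Prop :=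
  ∀ p v : ℕ, (w.take p).count (v + 2) ≤ (w.take p).count (v + 1)

/-- a Littlewood–Richardson tableau: rows weakly increasing, lattice reading word. -/
def IsLR (m : ℕ) (len : ℕ → ℕ) (f : ℕ → ℕ → ℕ) : Prop :=
  RowsWeak m len f ∧ IsLatticeWord (word m len f)

/-- LR tableaux of the given shape and content `η` (not necessarily semistandard). -/
def LRset (m : ℕ) (len : ℕ → ℕ) (η : ℕ → ℕ) : Set (ℕ → ℕ → ℕ) :=
  {f | IsFilling m len f ∧ IsLR m len f ∧ ∀ v, content m len f (v + 1) = η v}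

/-- `LR₀(A,η)`: nonmovable LR tableaux of shape `A` and content `η`. -/
def LR0set (m : ℕ) (off len : ℕ → ℕ) (η : ℕ → ℕ) : Set (ℕ → ℕ → ℕ) :=
  {f | IsFilling m len f ∧ IsLR m len f ∧ Nonmovable m off len f ∧
    ∀ v, content m len f (v + 1) = η v}

/-- semistandard tableaux of the given shape and content `μ`. -/
def SSTset (m : ℕ) (off len : ℕ → ℕ) (μ : ℕ → ℕ) : Set (ℕ → ℕ → ℕ) :=
  {f | IsFilling m len f ∧ Semistandard m off len f ∧
    ∀ v, content m len f (v + 1) = μ v}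

/-- offsets of the rows of `Sh_ν(μ)` (`ν` 0-indexed: `nu r = ν_{r+1}`):
row `r` (from the top) has offset `ν_{r+1} + ⋯ + ν_{m-1}`. -/
def shOff (m : ℕ) (nu : ℕ → ℕ) : ℕ → ℕ := fun r => ∑ j ∈ Finset.Ico r (m - 1), nu j

/-- the number of entries equal to `v` in the first `r` rows of `f`. -/
def cntRows (len : ℕ → ℕ) (f : ℕ → ℕ → ℕ) (v r : ℕ) : ℕ :=
  ∑ i ∈ Finset.range r, rowCount len f i v

/-- the map `θ`: row `k` (from the top, 0-indexed) of `θ(T)` lists, in weakly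
increasing order, the (1-indexed) indices of the rows of `T` containing the
entry `k+1`. -/
def theta (m : ℕ) (len : ℕ → ℕ) (μ : ℕ → ℕ) (f : ℕ → ℕ → ℕ) : ℕ → ℕ → ℕ :=
  fun k b => if k < m ∧ b < μ k then
      1 + ((Finset.range m).filter (fun r => cntRows len f (k + 1) (r + 1) ≤ b)).card
    else 0

namespace LR9
open Finset

/-- number of entries equal to `x` among positions `< s` of a row `h`. -/
def Q (h : ℕ → ℕ) (x s : ℕ) : ℕ := ((Finset.range s).filter (fun k => h k = x)).card

/-- number of entries `≤ w` among positions `< s`. -/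
def NQ (h : ℕ → ℕ) (w s : ℕ) : ℕ := ((Finset.range s).filter (fun k => h k ≤ w)).card

def S (c : ℕ → ℕ) (v : ℕ) : ℕ := ∑ u ∈ Finset.range v, c u

def srowF (m : ℕ) (c : ℕ → ℕ) (j : ℕ) : ℕ :=
  1 + ((Finset.range m).filter (fun v => S c (v + 1) ≤ j)).card

lemma S_mono (c : ℕ → ℕ) {v v' : ℕ} (h : v ≤ v') : S c v ≤ S c v' :=
  Finset.sum_le_sum_of_subset (Finset.range_subset_range.2 h)

lemma Q_mono (h : ℕ → ℕ) (x : ℕ) {s s' : ℕ} (hs : s ≤ s') : Q h x s ≤ Q h x s' :=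
  Finset.card_le_card (Finset.filter_subset_filter _ (Finset.range_subset_range.2 hs))

lemma Q_le (h : ℕ → ℕ) (x s : ℕ) : Q h x s ≤ s := by
  simpa [Q] using Finset.card_filter_le (Finset.range s) _

lemma NQ_le (h : ℕ → ℕ) (w s : ℕ) : NQ h w s ≤ s := by
  simpa [NQ] using Finset.card_filter_le (Finset.range s) _

lemma row_mono {L : ℕ} {h : ℕ → ℕ} (hm : ∀ k, k + 1 < L → h k ≤ h (k + 1)) :
    ∀ {k k' : ℕ}, k ≤ k' → k' < L → h k ≤ h k' := by
  intro k k'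
  induction k' with
  | zero => intro h1 h2; have : k = 0 := by omega
            subst this; exact le_rfl
  | succ n ih =>
    intro h1 h2
    rcases Nat.lt_or_ge k (n + 1) with hlt | hge
    · exact le_trans (ih (by omega) (by omega)) (hm n h2)
    · have : k = n + 1 := by omega
      subst this; exact le_rfl

lemma le_iff_lt_NQ {L : ℕ} {h : ℕ → ℕ} (hm : ∀ k, k + 1 < L → h k ≤ h (k + 1))
    {j : ℕ} (hj : j < L) (w : ℕ) : h j ≤ w ↔ j < NQ h w L := by
  constructor
  · intro hw
    have hsub : Finset.range (j + 1) ⊆ (Finset.range L).filter (fun k => h k ≤ w) := by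
      intro k hk
      simp only [Finset.mem_range] at hk
      simp only [Finset.mem_filter, Finset.mem_range]
      exact ⟨by omega, le_trans (row_mono hm (by omega) hj) hw⟩
    have := Finset.card_le_card hsub
    simpa [NQ] using this
  · intro hlt
    by_contra hne
    have hsub : (Finset.range L).filter (fun k => h k ≤ w) ⊆ Finset.range j := by
      intro k hk
      simp only [Finset.mem_filter, Finset.mem_range] at hk
      simp only [Finset.mem_range]
      by_contra hk'
      have : h j ≤ h k := row_mono hm (by omega) hk.1
      omega
    have := Finset.card_le_card hsub
    simp only [Finset.card_range] at this
    simp only [NQ] at hlt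
    omega

lemma NQ_eq_sum {L : ℕ} {h : ℕ → ℕ} (hpos : ∀ k, k < L → 1 ≤ h k) (w : ℕ) :
    NQ h w L = ∑ v ∈ Finset.range w, Q h (v + 1) L := by
  rw [NQ, Finset.card_eq_sum_card_fiberwise
    (f := fun k => h k - 1) (t := Finset.range w)
    (by intro k hk; simp only [Finset.mem_coe, Finset.mem_filter, Finset.mem_range] at hk ⊢
        have := hpos k hk.1; omega)]
  refine Finset.sum_congr rfl (fun v hv => ?_)
  simp only [Finset.mem_range] at hv
  rw [Q, Finset.filter_filter]
  congr 1
  apply Finset.filter_congr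
  intro k hk
  simp only [Finset.mem_range] at hk
  have := hpos k hk
  constructor
  · omega
  · omega

lemma sum_Q {L m : ℕ} {h : ℕ → ℕ} (hpos : ∀ k, k < L → 1 ≤ h k)
    (hle : ∀ k, k < L → h k ≤ m) : ∑ v ∈ Finset.range m, Q h (v + 1) L = L := by
  rw [← NQ_eq_sum hpos m, NQ]
  rw [Finset.filter_true_of_mem (fun k hk => hle k (Finset.mem_range.1 hk))]
  exact Finset.card_range L

lemma srow_pos (m : ℕ) (c : ℕ → ℕ) (j : ℕ) : 1 ≤ srowF m c j := Nat.le_add_right _ _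

lemma srow_mono (m : ℕ) (c : ℕ → ℕ) {j j' : ℕ} (hj : j ≤ j') :
    srowF m c j ≤ srowF m c j' := by
  unfold srowF
  have hsub : (Finset.range m).filter (fun v => S c (v + 1) ≤ j) ⊆
      (Finset.range m).filter (fun v => S c (v + 1) ≤ j') := by
    apply Finset.monotone_filter_right
    intro v _ hv
    exact le_trans hv hj
  have := Finset.card_le_card hsub
  omega

lemma srow_ge_iff {m : ℕ} {c : ℕ → ℕ} {j : ℕ} (hj : j < S c m) (v : ℕ) :
    v + 2 ≤ srowF m c j ↔ S c (v + 1) ≤ j := by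
  constructor
  · intro hge
    have hcard : v + 1 ≤ ((Finset.range m).filter (fun u => S c (u + 1) ≤ j)).card := by
      simp only [srowF] at hge
      omega
    obtain ⟨u, hu, huv⟩ : ∃ u ∈ (Finset.range m).filter (fun u => S c (u + 1) ≤ j), v ≤ u := by
      by_contra hcon
      push_neg at hcon
      have hsub : (Finset.range m).filter (fun u => S c (u + 1) ≤ j) ⊆ Finset.range v := by
        intro u hu
        exact Finset.mem_range.2 (hcon u hu)
      have := Finset.card_le_card hsub
      simp only [Finset.card_range] at this
      omega
    simp only [Finset.mem_filter] at hu
    exact le_trans (S_mono c (by omega)) hu.2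
  · intro hS
    have hvm : v + 1 ≤ m := by
      by_contra hcon
      have : S c m ≤ S c (v + 1) := S_mono c (by omega)
      omega
    have hsub : Finset.range (v + 1) ⊆ (Finset.range m).filter (fun u => S c (u + 1) ≤ j) := by
      intro u hu
      simp only [Finset.mem_range] at hu
      simp only [Finset.mem_filter, Finset.mem_range]
      exact ⟨by omega, le_trans (S_mono c (by omega)) hS⟩
    have := Finset.card_le_card hsub
    simp only [Finset.card_range] at this
    simp only [srowF]
    omega

lemma srow_le_iff {m : ℕ} {c : ℕ → ℕ} {j : ℕ} (hj : j < S c m) (v : ℕ) :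
    srowF m c j ≤ v + 1 ↔ j < S c (v + 1) := by
  rw [← not_iff_not]
  push_neg
  constructor
  · intro hlt; exact (srow_ge_iff hj v).1 (by omega)
  · intro hS; have := (srow_ge_iff hj v).2 hS; omega

lemma srow_le_m {m : ℕ} {c : ℕ → ℕ} {j : ℕ} (hj : j < S c m) : srowF m c j ≤ m := by
  rcases m with _ | m'
  · simp [S] at hj
  · exact (srow_le_iff hj m').2 hj

lemma srow_eq_iff {m : ℕ} {c : ℕ → ℕ} {j : ℕ} (hj : j < S c m) (x : ℕ) :
    srowF m c j = x + 1 ↔ S c x ≤ j ∧ j < S c (x + 1) := by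
  constructor
  · intro he
    refine ⟨?_, (srow_le_iff hj x).1 he.le⟩
    rcases x with _ | y
    · simp [S]
    · exact (srow_ge_iff hj y).1 (by omega)
  · rintro ⟨h1, h2⟩
    have hle := (srow_le_iff hj x).2 h2
    rcases x with _ | y
    · have := srow_pos m c j; omega
    · have := (srow_ge_iff hj y).2 h1; omega

lemma srow_count {m : ℕ} {c : ℕ → ℕ} {x : ℕ} (hx : x < m) :
    Q (srowF m c) (x + 1) (S c m) = c x := by
  have hset : (Finset.range (S c m)).filter (fun j => srowF m c j = x + 1) =
      Finset.Ico (S c x) (S c (x + 1)) := by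
    ext j
    simp only [Finset.mem_filter, Finset.mem_range, Finset.mem_Ico]
    constructor
    · rintro ⟨hj, he⟩; exact (srow_eq_iff hj x).1 he
    · rintro ⟨h1, h2⟩
      have hj : j < S c m := lt_of_lt_of_le h2 (S_mono c (by omega))
      exact ⟨hj, (srow_eq_iff hj x).2 ⟨h1, h2⟩⟩
  rw [Q, hset, Nat.card_Ico]
  have : S c (x + 1) = S c x + c x := Finset.sum_range_succ c x
  omega


/-! ### word machinery -/

def rowrev (len : ℕ → ℕ) (h : ℕ → ℕ → ℕ) (i : ℕ) : List ℕ :=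
  (List.range (len i)).reverse.map (h i)

lemma length_rowrev (len : ℕ → ℕ) (h : ℕ → ℕ → ℕ) (i : ℕ) :
    (rowrev len h i).length = len i := by
  simp [rowrev]

lemma word_succ (m : ℕ) (len : ℕ → ℕ) (h : ℕ → ℕ → ℕ) :
    word (m + 1) len h = word m len h ++ rowrev len h m := by
  simp [word, List.range_succ, rowrev]

lemma count_map_eq (g : ℕ → ℕ) (l : List ℕ) (x : ℕ) :
    (l.map g).count x = l.countP (fun k => g k = x) := by
  induction l with
  | nil => rfl
  | cons a t ih =>
    simp only [List.map_cons, List.count_cons, List.countP_cons, ih, beq_iff_eq,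
      decide_eq_true_eq]

lemma countP_range_eq (p : ℕ → Prop) [DecidablePred p] (n : ℕ) :
    (List.range n).countP (fun k => p k) = ((Finset.range n).filter p).card := by
  induction n with
  | zero => rfl
  | succ n ih =>
    rw [List.range_succ, List.countP_append, Finset.range_add_one, Finset.filter_insert]
    by_cases hp : p n <;>
      simp [hp, ih, Finset.card_insert_of_notMem, List.countP_cons]

lemma count_rowrev (len : ℕ → ℕ) (h : ℕ → ℕ → ℕ) (i x : ℕ) :
    (rowrev len h i).count x = rowCount len h i x := by
  rw [rowrev, List.map_reverse, List.count_reverse, count_map_eq, countP_range_eq,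
    rowCount]

lemma count_word (m : ℕ) (len : ℕ → ℕ) (h : ℕ → ℕ → ℕ) (x : ℕ) :
    (word m len h).count x = cntRows len h x m := by
  induction m with
  | zero => rfl
  | succ n ih =>
    rw [word_succ, List.count_append, ih, count_rowrev, cntRows, cntRows,
      Finset.sum_range_succ]

lemma word_length_succ (m : ℕ) (len : ℕ → ℕ) (h : ℕ → ℕ → ℕ) :
    (word (m + 1) len h).length = (word m len h).length + len m := by
  rw [word_succ, List.length_append, length_rowrev]

lemma word_length_mono (len : ℕ → ℕ) (h : ℕ → ℕ → ℕ) {i m : ℕ} (him : i ≤ m) :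
    (word i len h).length ≤ (word m len h).length := by
  induction m with
  | zero => simp [Nat.le_zero.1 him]
  | succ n ih =>
    rcases Nat.lt_or_ge i (n + 1) with hlt | hge
    · exact le_trans (ih (by omega)) (by rw [word_length_succ]; omega)
    · have : i = n + 1 := by omega
      subst this; exact le_rfl

lemma take_word (len : ℕ → ℕ) (h : ℕ → ℕ → ℕ) {m i t : ℕ} (him : i < m) (ht : t ≤ len i) :
    (word m len h).take ((word i len h).length + t) =
      word i len h ++ (rowrev len h i).take t := by
  induction m with
  | zero => omega
  | succ n ih =>
    rcases Nat.lt_or_ge i n with hlt | hge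
    · have hle : (word i len h).length + t ≤ (word n len h).length := by
        have h1 := word_length_mono len h (show i + 1 ≤ n from hlt)
        have h2 := word_length_succ i len h
        omega
      rw [word_succ, List.take_append, ih hlt,
        Nat.sub_eq_zero_of_le hle, List.take_zero, List.append_nil]
    · have : i = n := by omega
      subst this
      rw [word_succ, List.take_append,
        List.take_of_length_le (by omega), Nat.add_sub_cancel_left]

lemma count_map_range_rev (g : ℕ → ℕ) (L x : ℕ) :
    (((List.range L).reverse).map g).count x = Q g x L := by
  rw [List.map_reverse, List.count_reverse, count_map_eq, countP_range_eq]
  rfl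

lemma rowCount_eq_Q (len : ℕ → ℕ) (h : ℕ → ℕ → ℕ) (i x : ℕ) :
    rowCount len h i x = Q (h i) x (len i) := rfl

/-- count of `x` in `take t` of a reversed row. -/
lemma count_take_rowrev (len : ℕ → ℕ) (h : ℕ → ℕ → ℕ) {i t : ℕ} (ht : t ≤ len i) (x : ℕ) :
    ((rowrev len h i).take t).count x = Q (h i) x (len i) - Q (h i) x (len i - t) := by
  have hcnt : ((rowrev len h i).take t).count x + ((rowrev len h i).drop t).count x =
      (rowrev len h i).count x := by
    conv_rhs => rw [← List.take_append_drop t (rowrev len h i)]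
    rw [List.count_append]
  have hdrop : ((rowrev len h i).drop t).count x = Q (h i) x (len i - t) := by
    rw [rowrev, ← List.map_drop, List.drop_reverse, List.length_range,
      List.take_range, min_eq_left (by omega), count_map_range_rev]
  have hall : (rowrev len h i).count x = Q (h i) x (len i) := by
    rw [count_rowrev, rowCount_eq_Q]
  omega

lemma cnt_succ (len : ℕ → ℕ) (h : ℕ → ℕ → ℕ) (x i : ℕ) :
    cntRows len h x (i + 1) = cntRows len h x i + rowCount len h i x :=
  Finset.sum_range_succ _ _

lemma cnt_mono (len : ℕ → ℕ) (h : ℕ → ℕ → ℕ) (x : ℕ) {i j : ℕ} (hij : i ≤ j) :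
    cntRows len h x i ≤ cntRows len h x j :=
  Finset.sum_le_sum_of_subset (Finset.range_subset_range.2 hij)

lemma exists_of_Q_lt {h : ℕ → ℕ} {x s s' : ℕ} (hlt : Q h x s < Q h x s') :
    ∃ k, s ≤ k ∧ k < s' ∧ h k = x := by
  by_contra hcon
  push_neg at hcon
  have hsub : (Finset.range s').filter (fun k => h k = x) ⊆
      (Finset.range s).filter (fun k => h k = x) := by
    intro k hk
    simp only [Finset.mem_filter, Finset.mem_range] at hk ⊢
    refine ⟨?_, hk.2⟩
    by_contra hk'
    exact hcon k (by omega) hk.1 hk.2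
  have := Finset.card_le_card hsub
  simp only [Q] at hlt
  omega

lemma exists_row {m : ℕ} {len : ℕ → ℕ} {h : ℕ → ℕ → ℕ} {p : ℕ}
    (hp : p < (word m len h).length) :
    ∃ i, i < m ∧ (word i len h).length ≤ p ∧ p < (word (i + 1) len h).length := by
  induction m with
  | zero => simp [word] at hp
  | succ n ih =>
    rcases Nat.lt_or_ge p (word n len h).length with hlt | hge
    · obtain ⟨i, h1, h2, h3⟩ := ih hlt
      exact ⟨i, by omega, h2, h3⟩
    · exact ⟨n, by omega, hge, hp⟩

/-- the key inequality implies the lattice property of the reading word. -/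
lemma lattice_of_key {m : ℕ} {len : ℕ → ℕ} {h : ℕ → ℕ → ℕ}
    (hrows : RowsWeak m len h)
    (hkey : ∀ v i, cntRows len h (v + 2) (i + 1) ≤ cntRows len h (v + 1) i) :
    IsLatticeWord (word m len h) := by
  have hchain : ∀ v i, cntRows len h (v + 2) i ≤ cntRows len h (v + 1) i := by
    intro v i
    rcases i with _ | i'
    · simp [cntRows]
    · exact le_trans (hkey v i') (cnt_mono len h _ (by omega))
  intro p v
  rcases Nat.lt_or_ge p (word m len h).length with hp | hp
  · obtain ⟨i, him, h1, h2⟩ := exists_row hp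
    have hwl := word_length_succ i len h
    set t := p - (word i len h).length with htdef
    have ht : t ≤ len i := by omega
    have hpt : p = (word i len h).length + t := by omega
    rw [hpt, take_word len h him ht]
    rw [List.count_append, List.count_append, count_word, count_word,
      count_take_rowrev len h ht, count_take_rowrev len h ht]
    have hQ2le : Q (h i) (v + 2) (len i - t) ≤ Q (h i) (v + 2) (len i) :=
      Q_mono _ _ (by omega)
    have hQ1le : Q (h i) (v + 1) (len i - t) ≤ Q (h i) (v + 1) (len i) :=
      Q_mono _ _ (by omega)
    have hsucc2 : cntRows len h (v + 2) (i + 1) =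
        cntRows len h (v + 2) i + Q (h i) (v + 2) (len i) := by
      rw [cnt_succ, rowCount_eq_Q]
    rcases Nat.eq_or_lt_of_le hQ1le with hcase | hcase
    · -- no v+1 in the suffix
      have := hkey v i
      omega
    · -- some v+1 in the suffix: all v+2 of the row lie in the suffix
      obtain ⟨k0, hk0a, hk0b, hk0c⟩ := exists_of_Q_lt hcase
      have hQ20 : Q (h i) (v + 2) (len i - t) = 0 := by
        rw [Q, Finset.card_eq_zero, Finset.filter_eq_empty_iff]
        intro k hk
        simp only [Finset.mem_range] at hk
        have : h i k ≤ h i k0 :=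
          row_mono (L := len i) (hrows i him) (show k ≤ k0 by omega) hk0b
        omega
      have := hkey v i
      omega
  · rw [List.take_of_length_le (by omega), count_word, count_word]
    exact hchain v m

/-- the lattice property of the reading word implies the key inequality. -/
lemma key_of_lattice {m : ℕ} {len : ℕ → ℕ} {h : ℕ → ℕ → ℕ}
    (hrows : RowsWeak m len h)
    (hpos : ∀ i k, i < m → k < len i → 1 ≤ h i k)
    (hlat : IsLatticeWord (word m len h)) :
    ∀ v i, i < m → cntRows len h (v + 2) (i + 1) ≤ cntRows len h (v + 1) i := by
  intro v i him
  set N := NQ (h i) (v + 1) (len i) with hN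
  have hNle : N ≤ len i := NQ_le _ _ _
  set t := len i - N with htdef
  have ht : t ≤ len i := by omega
  have hLt : len i - t = N := by omega
  have hlp := hlat ((word i len h).length + t) v
  rw [take_word len h him ht, List.count_append, List.count_append,
    count_word, count_word, count_take_rowrev len h ht, count_take_rowrev len h ht,
    hLt] at hlp
  have hQ2 : Q (h i) (v + 2) N = 0 := by
    rw [Q, Finset.card_eq_zero, Finset.filter_eq_empty_iff]
    intro k hk
    simp only [Finset.mem_range] at hk
    have : h i k ≤ v + 1 := (le_iff_lt_NQ (hrows i him) (by omega) (v + 1)).2 (by omega)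
    omega
  have hQ1 : Q (h i) (v + 1) N = Q (h i) (v + 1) (len i) := by
    apply le_antisymm (Q_mono _ _ (by omega))
    apply Finset.card_le_card
    intro k hk
    simp only [Q, Finset.mem_filter, Finset.mem_range] at hk ⊢
    refine ⟨?_, hk.2⟩
    have : h i k ≤ v + 1 := by omega
    have := (le_iff_lt_NQ (hrows i him) hk.1 (v + 1)).1 this
    omega
  have hQ2le : Q (h i) (v + 2) N ≤ Q (h i) (v + 2) (len i) := Q_mono _ _ (by omega)
  have hs2 := cnt_succ len h (v + 2) i
  rw [rowCount_eq_Q] at hs2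
  omega

/-! ### application lemmas about `theta` -/

lemma rowCount_eq_zero {len : ℕ → ℕ} {h : ℕ → ℕ → ℕ} {i v : ℕ}
    (hne : ∀ j, j < len i → h i j ≠ v) : rowCount len h i v = 0 := by
  rw [rowCount, Finset.card_eq_zero, Finset.filter_eq_empty_iff]
  intro j hj
  exact hne j (Finset.mem_range.1 hj)

lemma entries_le {m : ℕ} {len η : ℕ → ℕ} {h : ℕ → ℕ → ℕ}
    (hf : IsFilling m len h)
    (hc : ∀ v, content m len h (v + 1) = η v)
    (hη : ∀ v, m ≤ v → η v = 0) :
    ∀ i k, i < m → k < len i → h i k ≤ m := by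
  intro i k him hk
  by_contra hcon
  push_neg at hcon
  have hpos := hf.1 i k him hk
  obtain ⟨w, hw⟩ : ∃ w, h i k = w + 1 := ⟨h i k - 1, by omega⟩
  have h1 : 1 ≤ rowCount len h i (w + 1) := by
    rw [rowCount]
    refine Finset.card_pos.2 ⟨k, ?_⟩
    simp [Finset.mem_filter, Finset.mem_range, hk, hw]
  have h2 : rowCount len h i (w + 1) ≤ content m len h (w + 1) :=
    Finset.single_le_sum (f := fun r => rowCount len h r (w + 1))
      (fun _ _ => Nat.zero_le _) (Finset.mem_range.2 him)
  have h3 : content m len h (w + 1) = η w := hc w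
  have h4 : η w = 0 := hη w (by omega)
  omega

lemma theta_pos_eq {m : ℕ} {len μ : ℕ → ℕ} {h : ℕ → ℕ → ℕ} {k b : ℕ}
    (hk : k < m) (hb : b < μ k) :
    theta m len μ h k b = srowF m (fun r => rowCount len h r (k + 1)) b := by
  rw [theta, if_pos ⟨hk, hb⟩]
  rfl

lemma S_content {m : ℕ} {len : ℕ → ℕ} {h : ℕ → ℕ → ℕ} {k : ℕ} :
    S (fun r => rowCount len h r (k + 1)) m = content m len h (k + 1) := rfl

/-- entries of `theta` are at most `m`. -/
lemma theta_le_m {m : ℕ} {len μ : ℕ → ℕ} {h : ℕ → ℕ → ℕ}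
    (hcont : ∀ v, content m len h (v + 1) = μ v) {k b : ℕ}
    (hk : k < m) (hb : b < μ k) : theta m len μ h k b ≤ m := by
  rw [theta_pos_eq hk hb]
  exact srow_le_m (by rw [S_content, hcont]; exact hb)

lemma theta_rowCount_all {m : ℕ} {len μ : ℕ → ℕ} {h : ℕ → ℕ → ℕ}
    (hfil : IsFilling m len h)
    (hcont : ∀ v, content m len h (v + 1) = μ v)
    (hle : ∀ i k, i < m → k < len i → h i k ≤ m) :
    ∀ r x, rowCount μ (theta m len μ h) r (x + 1) = rowCount len h x (r + 1) := by
  intro r x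
  rcases Nat.lt_or_ge r m with hr | hr
  · rcases Nat.lt_or_ge x m with hx | hx
    · -- main case
      have hS : S (fun v => rowCount len h v (r + 1)) m = μ r := by
        rw [S_content]; exact hcont r
      have hagree : Q (theta m len μ h r) (x + 1) (μ r) =
          Q (srowF m (fun v => rowCount len h v (r + 1))) (x + 1) (μ r) := by
        unfold Q
        congr 1
        apply Finset.filter_congr
        intro b hb
        simp only [Finset.mem_range] at hb
        rw [theta_pos_eq hr hb]
      rw [rowCount_eq_Q, hagree, ← hS, srow_count hx]
    · -- x ≥ m : both sides zero
      rw [rowCount_eq_zero (v := x + 1) (fun b hb hc => by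
        have := theta_le_m hcont hr hb; omega)]
      rcases Nat.lt_or_ge x m with h' | h'
      · omega
      · rw [rowCount_eq_zero (fun j hj hc => by
          have := hfil.2 x j (Or.inl h'); omega)]
  · -- r ≥ m : both sides zero
    rw [rowCount_eq_zero (v := x + 1) (fun b hb hc => by
      have : theta m len μ h r b = 0 := by
        rw [theta, if_neg]; rintro ⟨h1, _⟩; omega
      omega)]
    rcases Nat.lt_or_ge x m with hx | hx
    · rw [rowCount_eq_zero (fun j hj hc => by
        have := hle x j hx hj; omega)]
    · rw [rowCount_eq_zero (fun j hj hc => by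
        have := hfil.2 x j (Or.inl hx); omega)]

lemma content_theta {m : ℕ} {len μ : ℕ → ℕ} {h : ℕ → ℕ → ℕ}
    (hfil : IsFilling m len h)
    (hcont : ∀ v, content m len h (v + 1) = μ v)
    (hle : ∀ i k, i < m → k < len i → h i k ≤ m) (v : ℕ)
    (hlen0 : ∀ i, m ≤ i → len i = 0) :
    content m μ (theta m len μ h) (v + 1) = len v := by
  rw [content]
  have : ∀ k ∈ Finset.range m, rowCount μ (theta m len μ h) k (v + 1) =
      rowCount len h v (k + 1) := fun k _ => theta_rowCount_all hfil hcont hle k v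
  rw [Finset.sum_congr rfl this]
  rcases Nat.lt_or_ge v m with hv | hv
  · exact sum_Q (fun k hk => hfil.1 v k hv hk) (fun k hk => hle v k hv hk)
  · rw [Finset.sum_eq_zero, hlen0 v hv]
    intro k _
    exact rowCount_eq_zero (fun j hj hc => by
      have := hlen0 v hv; omega)

/-- a weakly increasing positive row is reconstructed from its value counts. -/
lemma recon {m L : ℕ} {g : ℕ → ℕ}
    (hm : ∀ k, k + 1 < L → g k ≤ g (k + 1))
    (hpos : ∀ k, k < L → 1 ≤ g k) (hle : ∀ k, k < L → g k ≤ m)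
    {j : ℕ} (hj : j < L) :
    g j = srowF m (fun x => Q g (x + 1) L) j := by
  have hSm : S (fun x => Q g (x + 1) L) m = L := sum_Q hpos hle
  have hiff : ∀ w, g j ≤ w + 1 ↔ srowF m (fun x => Q g (x + 1) L) j ≤ w + 1 := by
    intro w
    rw [le_iff_lt_NQ hm hj (w + 1), NQ_eq_sum hpos (w + 1),
      srow_le_iff (by omega) w]
    exact Iff.rfl
  have hp2 := srow_pos m (fun x => Q g (x + 1) L) j
  have hp1 := hpos j hj
  have h1 := hiff (srowF m (fun x => Q g (x + 1) L) j - 1)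
  have h2 := hiff (g j - 1)
  rw [show srowF m (fun x => Q g (x + 1) L) j - 1 + 1 =
    srowF m (fun x => Q g (x + 1) L) j by omega] at h1
  rw [show g j - 1 + 1 = g j by omega] at h2
  have hle1 : g j ≤ srowF m (fun x => Q g (x + 1) L) j := h1.2 le_rfl
  have hle2 : srowF m (fun x => Q g (x + 1) L) j ≤ g j := h2.1 le_rfl
  omega

/-- applying `theta` twice gives back the original tableau. -/
lemma theta_theta {m : ℕ} {len μ : ℕ → ℕ} {h : ℕ → ℕ → ℕ}
    (hfil : IsFilling m len h) (hrw : RowsWeak m len h)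
    (hcont : ∀ v, content m len h (v + 1) = μ v)
    (hle : ∀ i k, i < m → k < len i → h i k ≤ m) :
    theta m μ len (theta m len μ h) = h := by
  funext k b
  rcases Classical.em (k < m ∧ b < len k) with hkb | hkb
  · obtain ⟨hk, hb⟩ := hkb
    rw [theta_pos_eq hk hb]
    have hcfun : (fun r => rowCount μ (theta m len μ h) r (k + 1)) =
        (fun r => Q (h k) (r + 1) (len k)) := by
      funext r
      rw [theta_rowCount_all hfil hcont hle r k, rowCount_eq_Q]
    rw [hcfun]
    exact (recon (hrw k hk) (fun j hj => hfil.1 k j hk hj) (fun j hj => hle k j hk hj)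
      hb).symm
  · rw [theta, if_neg hkb]
    rcases Classical.em (k < m) with hk | hk
    · exact (hfil.2 k b (Or.inr (by omega))).symm
    · exact (hfil.2 k b (Or.inl (by omega))).symm

end LR9


/-- For a partition `λ` with at most `m` parts, a composition
`μ` of length `m` with `|μ| = |λ|`, and `ν ∈ ℤ_{≥0}^{m-1}` with
`ν_i + μ_i ≥ μ_{i+1}`, every `θ_ν(T)` (`T ∈ SST(λ,μ)`) is an LR tableau of
shape `Sh_ν(μ)` and content `λ`, and `θ_ν` is a bijection from `SST(λ,μ)`
onto `LR(Sh_ν(μ),λ)`. -/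
theorem theta_bijection_LR (m : ℕ) (lam mu nu : ℕ → ℕ)
    (hlam : ∀ i, lam (i + 1) ≤ lam i) (hlam0 : ∀ i, m ≤ i → lam i = 0)
    (hmu0 : ∀ i, m ≤ i → mu i = 0)
    (hsize : ∑ i ∈ Finset.range m, mu i = ∑ i ∈ Finset.range m, lam i)
    (hnu : ∀ r, r + 1 < m → mu (r + 1) ≤ nu r + mu r) :
    (∀ f ∈ SSTset m (fun _ => 0) lam mu, theta m lam mu f ∈ LRset m mu lam) ∧
    Set.BijOn (theta m lam mu) (SSTset m (fun _ => 0) lam mu) (LRset m mu lam) := by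
  have hforward : ∀ f ∈ SSTset m (fun _ => 0) lam mu, theta m lam mu f ∈ LRset m mu lam := by
    rintro f ⟨hfil, ⟨hrw, hcs⟩, hcont⟩
    have hle : ∀ i k, i < m → k < lam i → f i k ≤ m := LR9.entries_le hfil hcont hmu0
    have hrc := LR9.theta_rowCount_all hfil hcont hle
    have hrweak : RowsWeak m mu (theta m lam mu f) := by
      intro k hk b hb
      rw [LR9.theta_pos_eq hk (show b < mu k by omega), LR9.theta_pos_eq hk hb]
      exact LR9.srow_mono _ _ (by omega)
    refine ⟨⟨?_, ?_⟩, ⟨hrweak, ?_⟩, ?_⟩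
    · intro k b hk hb
      rw [LR9.theta_pos_eq hk hb]
      have := LR9.srow_pos m (fun r => rowCount lam f r (k + 1)) b
      omega
    · intro k b hkb
      rw [theta, if_neg]
      rintro ⟨h1, h2⟩
      rcases hkb with h | h <;> omega
    · -- lattice word
      apply LR9.lattice_of_key hrweak
      intro v i
      have hcnt : ∀ x n, cntRows mu (theta m lam mu f) (x + 1) n
          = ∑ k ∈ Finset.range n, LR9.Q (f x) (k + 1) (lam x) := by
        intro x n
        exact Finset.sum_congr rfl (fun k _ => by
          rw [hrc k x, LR9.rowCount_eq_Q])
      rw [hcnt (v + 1) (i + 1), hcnt v i]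
      rcases Nat.lt_or_ge (v + 1) m with hv | hv
      · rw [← LR9.NQ_eq_sum (fun k hk => hfil.1 (v + 1) k hv hk) (i + 1),
          ← LR9.NQ_eq_sum (fun k hk => hfil.1 v k (by omega) hk) i]
        apply Finset.card_le_card
        intro j hj
        simp only [Finset.mem_filter, Finset.mem_range] at hj ⊢
        have hjlam : j < lam v := lt_of_lt_of_le hj.1 (hlam v)
        have hstrict := hcs v j hv (Nat.zero_le j) (by simpa using hjlam)
          (Nat.zero_le j) (by simpa using hj.1)
        simp only [Nat.sub_zero] at hstrict
        exact ⟨hjlam, by omega⟩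
      · rw [Finset.sum_eq_zero]
        · exact Nat.zero_le _
        · intro k _
          have : LR9.Q (f (v + 1)) (k + 1) (lam (v + 1)) = 0 := by
            rw [← LR9.rowCount_eq_Q]
            exact LR9.rowCount_eq_zero (fun j hj _ => by
              rw [hlam0 (v + 1) hv] at hj; omega)
          exact this
    · intro v
      exact LR9.content_theta hfil hcont hle v hlam0
  have hback : ∀ g ∈ LRset m mu lam, theta m mu lam g ∈ SSTset m (fun _ => 0) lam mu := by
    rintro g ⟨hfil, ⟨hrw, hlat⟩, hcont⟩
    have hle : ∀ i k, i < m → k < mu i → g i k ≤ m := LR9.entries_le hfil hcont hlam0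
    have hkey := LR9.key_of_lattice hrw (fun i k hi hk => hfil.1 i k hi hk) hlat
    refine ⟨⟨?_, ?_⟩, ⟨?_, ?_⟩, ?_⟩
    · intro k b hk hb
      rw [LR9.theta_pos_eq hk hb]
      have := LR9.srow_pos m (fun r => rowCount mu g r (k + 1)) b
      omega
    · intro k b hkb
      rw [theta, if_neg]
      rintro ⟨h1, h2⟩
      rcases hkb with h | h <;> omega
    · intro k hk b hb
      rw [LR9.theta_pos_eq hk (show b < lam k by omega), LR9.theta_pos_eq hk hb]
      exact LR9.srow_mono _ _ (by omega)
    · -- column strictness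
      intro i j hi h1 h2 h3 h4
      have hji : j < lam i := by simpa using h2
      have hji1 : j < lam (i + 1) := by simpa using h4
      simp only [Nat.sub_zero]
      rw [LR9.theta_pos_eq (show i < m by omega) hji, LR9.theta_pos_eq hi hji1]
      have hSi : LR9.S (fun r => rowCount mu g r (i + 1)) m = lam i := by
        rw [LR9.S_content]; exact hcont i
      have hSi1 : LR9.S (fun r => rowCount mu g r (i + 1 + 1)) m = lam (i + 1) := by
        rw [LR9.S_content]; exact hcont (i + 1)
      obtain ⟨w, hw⟩ : ∃ w, LR9.srowF m (fun r => rowCount mu g r (i + 1)) j = w + 1 :=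
        ⟨LR9.srowF m (fun r => rowCount mu g r (i + 1)) j - 1,
          by have := LR9.srow_pos m (fun r => rowCount mu g r (i + 1)) j; omega⟩
      have hji' : j < LR9.S (fun r => rowCount mu g r (i + 1)) m := by omega
      have hji1' : j < LR9.S (fun r => rowCount mu g r (i + 1 + 1)) m := by omega
      have hSw : LR9.S (fun r => rowCount mu g r (i + 1)) w ≤ j :=
        ((LR9.srow_eq_iff hji' w).1 hw).1
      have hwm : w < m := by
        have := LR9.srow_le_m hji'
        omega
      have hk2 : LR9.S (fun r => rowCount mu g r (i + 1 + 1)) (w + 1) ≤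
          LR9.S (fun r => rowCount mu g r (i + 1)) w := by
        have hthis := hkey i w hwm
        simpa [LR9.S, cntRows] using hthis
      have hfin : w + 2 ≤ LR9.srowF m (fun r => rowCount mu g r (i + 1 + 1)) j :=
        (LR9.srow_ge_iff hji1' w).2 (le_trans hk2 hSw)
      omega
    · intro v
      exact LR9.content_theta hfil hcont hle v hmu0
  have hinv1 : ∀ f ∈ SSTset m (fun _ => 0) lam mu,
      theta m mu lam (theta m lam mu f) = f := by
    rintro f ⟨hfil, ⟨hrw, _⟩, hcont⟩
    exact LR9.theta_theta hfil hrw hcont (LR9.entries_le hfil hcont hmu0)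
  have hinv2 : ∀ g ∈ LRset m mu lam, theta m lam mu (theta m mu lam g) = g := by
    rintro g ⟨hfil, ⟨hrw, _⟩, hcont⟩
    exact LR9.theta_theta hfil hrw hcont (LR9.entries_le hfil hcont hlam0)
  exact ⟨hforward, Set.InvOn.bijOn ⟨hinv1, hinv2⟩ hforward hback⟩
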